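/- Let z₀ ∈ ℂ, r > 0, and λ ∈ ℂ with λ not a Gaussian integer. Then for every polynomial q of degree at most n with Gaussian-integer coefficients, sup_{|z−z₀| ≤ r} |λ − q(z)| ≥ c(λ) · (r/|z₀|)ⁿ, where c(λ) = min over Gaussian integers m of |λ − m| > 0. (This uses the growth inequality |p(0)| ≤ (|z₀|/r)ⁿ · sup_{K_r} |p| for any degree-n polynomial p.) -/

import Mathlib

open Polynomial Metric Set

lemma gauss_closed : IsClosed {z : ℂ | ∃ a b : ℤ, z = (a : ℂ) + (b : ℂ) * Complex.I} := by
  have h1 : IsClosed (Set.range ((↑) : ℤ → ℝ)) :=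
    Int.isClosedEmbedding_coe_real.isClosed_range
  have : {z : ℂ | ∃ a b : ℤ, z = (a : ℂ) + (b : ℂ) * Complex.I} =
      (Complex.re ⁻¹' (Set.range ((↑) : ℤ → ℝ))) ∩
      (Complex.im ⁻¹' (Set.range ((↑) : ℤ → ℝ))) := by
    ext z
    constructor
    · rintro ⟨a, b, rfl⟩
      constructor
      · exact ⟨a, by simp⟩
      · exact ⟨b, by simp⟩
    · rintro ⟨⟨a, ha⟩, ⟨b, hb⟩⟩
      refine ⟨a, b, ?_⟩
      apply Complex.ext <;> simp [← ha, ← hb]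
  rw [this]
  exact (h1.preimage Complex.continuous_re).inter (h1.preimage Complex.continuous_im)

/-- Growth lemma: `|P(0)| ≤ (|z₀|/r)^n * M` when `M` bounds `|P|` on the closed ball. -/
lemma growth_lemma (n : ℕ) (P : Polynomial ℂ) (hP : P.natDegree ≤ n) (z₀ : ℂ) (r : ℝ)
    (hr : 0 < r) (hrz : r < ‖z₀‖) (M : ℝ)
    (hM : ∀ z ∈ Metric.closedBall z₀ r, ‖P.eval z‖ ≤ M) :
    ‖P.eval 0‖ ≤ (‖z₀‖ / r) ^ n * M := by
  have hz₀ : z₀ ≠ 0 := by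
    intro h; rw [h] at hrz; simp at hrz; linarith
  have hrC : (r : ℂ) ≠ 0 := by exact_mod_cast hr.ne'
  set Q : Polynomial ℂ := P.comp (Polynomial.C z₀ + Polynomial.C (r : ℂ) * Polynomial.X) with hQ
  have hQdeg : Q.natDegree ≤ n := by
    rw [hQ, Polynomial.natDegree_comp]
    have : (Polynomial.C z₀ + Polynomial.C (r : ℂ) * Polynomial.X).natDegree ≤ 1 := by
      apply le_trans (Polynomial.natDegree_add_le _ _)
      simp [Polynomial.natDegree_C_mul_X _ hrC]
    calc P.natDegree * (Polynomial.C z₀ + Polynomial.C (r : ℂ) * Polynomial.X).natDegree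
        ≤ n * 1 := Nat.mul_le_mul hP this
      _ = n := by ring
  have hQeval : ∀ u : ℂ, Q.eval u = P.eval (z₀ + r * u) := by
    intro u; simp [hQ]
  -- key identity: for w ≠ 0, (reflect n Q).eval w * (w⁻¹)^n = Q.eval w⁻¹
  have key : ∀ w : ℂ, w ≠ 0 →
      (Polynomial.reflect n Q).eval w * (w⁻¹) ^ n = Q.eval w⁻¹ := by
    intro w hw
    have hw' : (w⁻¹ : ℂ) ≠ 0 := inv_ne_zero hw
    letI : Invertible (w⁻¹ : ℂ) := invertibleOfNonzero hw'
    have h := Polynomial.eval₂_reflect_mul_pow (RingHom.id ℂ) (w⁻¹) n Q hQdeg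
    have hinv : (⅟ (w⁻¹ : ℂ)) = w := by
      rw [invOf_eq_inv, inv_inv]
    rw [hinv] at h
    exact h
  have hMnn : 0 ≤ M := le_trans (norm_nonneg _) (hM z₀ (by simp [hr.le]))
  -- bound reflect n Q on the unit sphere
  have hbound : ∀ w ∈ frontier (Metric.ball (0 : ℂ) 1),
      ‖(Polynomial.reflect n Q).eval w‖ ≤ M := by
    intro w hw
    rw [frontier_ball (0 : ℂ) one_ne_zero] at hw
    have hwabs : ‖w‖ = 1 := by simpa [Complex.dist_eq] using hw
    have hw0 : w ≠ 0 := by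
      intro h; rw [h] at hwabs; simp at hwabs
    have h := key w hw0
    have h2 : ‖(Polynomial.reflect n Q).eval w‖ * (‖w⁻¹‖) ^ n
        = ‖Q.eval w⁻¹‖ := by
      rw [← norm_pow, ← norm_mul, h]
    rw [norm_inv, hwabs] at h2
    simp only [inv_one, one_pow, mul_one] at h2
    rw [h2, hQeval]
    apply hM
    simp only [Metric.mem_closedBall, Complex.dist_eq]
    have : z₀ + ↑r * w⁻¹ - z₀ = (r : ℂ) * w⁻¹ := by ring
    rw [this, norm_mul, norm_inv, hwabs]
    simp [abs_of_pos hr]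
  -- maximum modulus
  set w₀ : ℂ := -(r : ℂ) / z₀ with hw₀def
  have hw₀abs : ‖w₀‖ = r / ‖z₀‖ := by
    rw [hw₀def, norm_div]
    simp [abs_of_pos hr]
  have hw₀mem : w₀ ∈ closure (Metric.ball (0 : ℂ) 1) := by
    rw [closure_ball (0 : ℂ) one_ne_zero]
    simp only [Metric.mem_closedBall, Complex.dist_eq, sub_zero]
    rw [hw₀abs]
    rw [div_le_one (lt_trans hr hrz)]
    exact hrz.le
  have hmax : ‖(Polynomial.reflect n Q).eval w₀‖ ≤ M := by
    apply Complex.norm_le_of_forall_mem_frontier_norm_le Metric.isBounded_ball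
      ((Polynomial.reflect n Q).differentiable.diffContOnCl) hbound hw₀mem
  have hw₀ne : w₀ ≠ 0 := by
    rw [hw₀def]
    exact div_ne_zero (neg_ne_zero.mpr hrC) hz₀
  have h := key w₀ hw₀ne
  have hw₀inv : (w₀⁻¹ : ℂ) = -z₀ / r := by
    rw [hw₀def, inv_div, div_neg, ← neg_div]
  have hP0 : Q.eval w₀⁻¹ = P.eval 0 := by
    rw [hQeval, hw₀inv]
    congr 1
    field_simp
    ring
  rw [hP0] at h
  have habs : ‖(Polynomial.reflect n Q).eval w₀‖ * (‖w₀‖)⁻¹ ^ n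
      = ‖P.eval 0‖ := by
    rw [← norm_inv, ← norm_pow, ← norm_mul, h]
  rw [hw₀abs] at habs
  have hrpos : (0:ℝ) < r / ‖z₀‖ := div_pos hr (lt_trans hr hrz)
  have : ‖P.eval 0‖ ≤ M * (r / ‖z₀‖)⁻¹ ^ n := by
    rw [← habs]
    gcongr
  calc ‖P.eval 0‖ ≤ M * (r / ‖z₀‖)⁻¹ ^ n := this
    _ = (‖z₀‖ / r) ^ n * M := by
        rw [inv_div]; ring

theorem stmt_2 (z₀ : ℂ) (r : ℝ) (hr : 0 < r) (hrz : r < ‖z₀‖)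
    (lam : ℂ) (hlam : ∀ a b : ℤ, lam ≠ (a : ℂ) + (b : ℂ) * Complex.I)
    (n : ℕ) (q : Polynomial ℂ) (hqdeg : q.natDegree ≤ n)
    (hqcoeff : ∀ k : ℕ, ∃ a b : ℤ, q.coeff k = (a : ℂ) + (b : ℂ) * Complex.I) :
    (0 < sInf {x : ℝ | ∃ a b : ℤ, x = ‖lam - ((a : ℂ) + (b : ℂ) * Complex.I)‖}) ∧
    ∃ z : ℂ, ‖z - z₀‖ ≤ r ∧
      sInf {x : ℝ | ∃ a b : ℤ, x = ‖lam - ((a : ℂ) + (b : ℂ) * Complex.I)‖} *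
        (r / ‖z₀‖) ^ n ≤ ‖lam - q.eval z‖ := by
  set S : Set ℝ := {x : ℝ | ∃ a b : ℤ, x = ‖lam - ((a : ℂ) + (b : ℂ) * Complex.I)‖}
    with hS
  set G : Set ℂ := {z : ℂ | ∃ a b : ℤ, z = (a : ℂ) + (b : ℂ) * Complex.I} with hG
  have hGne : G.Nonempty := ⟨0, 0, 0, by simp⟩
  have hlamG : lam ∉ G := by
    rintro ⟨a, b, h⟩; exact hlam a b h
  have hd : 0 < Metric.infDist lam G :=
    (gauss_closed.notMem_iff_infDist_pos hGne).mp hlamG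
  have hSne : S.Nonempty := ⟨‖lam - (0 : ℂ)‖, 0, 0, by simp⟩
  have hSbdd : BddBelow S := ⟨0, by rintro x ⟨a, b, rfl⟩; exact norm_nonneg _⟩
  have hlb : Metric.infDist lam G ≤ sInf S := by
    apply le_csInf hSne
    rintro x ⟨a, b, rfl⟩
    have : ((a : ℂ) + (b : ℂ) * Complex.I) ∈ G := ⟨a, b, rfl⟩
    calc Metric.infDist lam G ≤ dist lam ((a : ℂ) + (b : ℂ) * Complex.I) :=
        Metric.infDist_le_dist_of_mem this
      _ = ‖lam - ((a : ℂ) + (b : ℂ) * Complex.I)‖ := Complex.dist_eq _ _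
  have hcpos : 0 < sInf S := lt_of_lt_of_le hd hlb
  refine ⟨hcpos, ?_⟩
  set P : Polynomial ℂ := Polynomial.C lam - q with hP
  have hPdeg : P.natDegree ≤ n := by
    apply le_trans (Polynomial.natDegree_sub_le _ _)
    simp [Polynomial.natDegree_C, hqdeg]
  -- maximum of |P| on the closed ball
  have hcomp : IsCompact (Metric.closedBall z₀ r) := isCompact_closedBall _ _
  have hne : (Metric.closedBall z₀ r).Nonempty := ⟨z₀, by simp [hr.le]⟩
  obtain ⟨zs, hzs, hzmax⟩ := hcomp.exists_isMaxOn hne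
    ((continuous_norm.comp (P.continuous_aeval)).continuousOn)
  have hzmax' : ∀ z ∈ Metric.closedBall z₀ r,
      ‖P.eval z‖ ≤ ‖P.eval zs‖ := by
    intro z hz
    have := hzmax hz
    simpa using this
  have hgrow := growth_lemma n P hPdeg z₀ r hr hrz (‖P.eval zs‖) hzmax'
  have hP0 : P.eval 0 = lam - q.coeff 0 := by
    simp [hP, Polynomial.eval_sub, Polynomial.eval_C, Polynomial.eval_zero,
      Polynomial.coeff_zero_eq_eval_zero]
  have hc0 : sInf S ≤ ‖P.eval 0‖ := by
    obtain ⟨a, b, hab⟩ := hqcoeff 0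
    apply csInf_le hSbdd
    exact ⟨a, b, by rw [hP0, hab]⟩
  refine ⟨zs, ?_, ?_⟩
  · simpa [Complex.dist_eq] using hzs
  · have hzr : (0:ℝ) < ‖z₀‖ / r := div_pos (lt_trans hr hrz) hr
    have h1 : sInf S ≤ (‖z₀‖ / r) ^ n * ‖P.eval zs‖ :=
      le_trans hc0 hgrow
    have heq : ‖lam - q.eval zs‖ = ‖P.eval zs‖ := by
      simp [hP]
    have hz₀' : (0:ℝ) < ‖z₀‖ := lt_trans hr hrz
    have hone : (‖z₀‖ / r) ^ n * (r / ‖z₀‖) ^ n = 1 := by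
      rw [← mul_pow]
      have h2 : ‖z₀‖ / r * (r / ‖z₀‖) = 1 := by
        field_simp
      rw [h2, one_pow]
    rw [heq]
    calc sInf S * (r / ‖z₀‖) ^ n
        ≤ (‖z₀‖ / r) ^ n * ‖P.eval zs‖ * (r / ‖z₀‖) ^ n :=
          mul_le_mul_of_nonneg_right h1 (by positivity)
      _ = ‖P.eval zs‖ * ((‖z₀‖ / r) ^ n * (r / ‖z₀‖) ^ n) := by
          ring
      _ = ‖P.eval zs‖ := by rw [hone, mul_one]
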